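/- Let V be a pseudovariety of ordered monoids and u, v ∈ Ω_A M. The inequality u ≤ v holds in V if and only if for every V-recognizable language L ⊆ A*, membership u ∈ \overline{L} implies v ∈ \overline{L}. -/

import Mathlib

/-- `φ` recognizes `L` with an up-closed (order filter) accepting set. -/
def ORecognizes {A S : Type*} [Monoid S] [PartialOrder S]
    (φ : FreeMonoid A →* S) (L : Set (FreeMonoid A)) : Prop :=
  ∃ F : Set S, (∀ a b : S, a ≤ b → a ∈ F → b ∈ F) ∧ L = ⇑φ ⁻¹' F

/-- `L` is `V`-recognizable: `L = φ⁻¹(F)` for a homomorphism `φ : A* → S` into a finite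
ordered monoid `S ∈ V` and an up-closed subset `F ⊆ S`. -/
def VRecognizable (V : ∀ (S : Type) [Monoid S] [PartialOrder S], Prop)
    {A : Type*} (L : Set (FreeMonoid A)) : Prop :=
  ∃ (S : Type) (iS : Monoid S) (oS : PartialOrder S), @V S iS oS ∧ Finite S ∧
    ∃ φ : @MonoidHom (FreeMonoid A) S _ (@MulOneClass.toMulOne S (@Monoid.toMulOneClass S iS)),
      @ORecognizes A S iS oS φ L

/-- The inequality `u ≤ v` (of elements of the free profinite monoid `M`) holds in the
pseudovariety `V` of ordered monoids: `ψ u ≤ ψ v` for every continuous homomorphism `ψ`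
from `M` into a (finite, discrete) member of `V`. -/
def IneqHoldsIn (V : ∀ (S : Type) [Monoid S] [PartialOrder S], Prop)
    {M : Type*} [Monoid M] [TopologicalSpace M] (u v : M) : Prop :=
  ∀ (S : Type) [Monoid S] [PartialOrder S], V S →
    ∀ ψ : M →* S, (∀ s : Set S, IsOpen (⇑ψ ⁻¹' s)) → ψ u ≤ ψ v

/-- Key: the closure of `ι '' L` where `L = (ψ ∘ ι)⁻¹ F` equals `ψ⁻¹ F`,
when `ι` has dense range and all `ψ`-preimages are open. -/
lemma closure_image_preimage {A M S : Type*} [Monoid M] [TopologicalSpace M] [Monoid S]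
    (ι : FreeMonoid A →* M) (hdense : DenseRange ⇑ι) (ψ : M →* S)
    (hψ : ∀ s : Set S, IsOpen (⇑ψ ⁻¹' s)) (F : Set S) :
    closure (⇑ι '' (⇑ι ⁻¹' (⇑ψ ⁻¹' F))) = ⇑ψ ⁻¹' F := by
  have himg : ⇑ι '' (⇑ι ⁻¹' (⇑ψ ⁻¹' F)) = (⇑ψ ⁻¹' F) ∩ Set.range ⇑ι :=
    Set.image_preimage_eq_inter_range
  have hclosed : IsClosed (⇑ψ ⁻¹' F) := by
    rw [← isOpen_compl_iff, ← Set.preimage_compl]; exact hψ _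
  apply le_antisymm
  · exact closure_minimal (by rw [himg]; exact Set.inter_subset_left) hclosed
  · rw [himg]
    exact hdense.open_subset_closure_inter (hψ F)

/-- Let `V` be a pseudovariety of (finite, compatibly) ordered monoids and let `M` be
the free profinite monoid over the finite alphabet `A` (axiomatized as below).  For
`u, v ∈ M`, the inequality `u ≤ v` holds in `V` if and only if for every
`V`-recognizable language `L ⊆ A*`, `u ∈ closure L` implies `v ∈ closure L`. -/
theorem ineqHoldsIn_iff_closures
    {A M : Type*} [Fintype A] [Monoid M] [TopologicalSpace M]
    [CompactSpace M] [T2Space M]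
    (hmul : Continuous fun p : M × M => p.1 * p.2)
    (ι : FreeMonoid A →* M) (hdense : DenseRange ⇑ι)
    (hext : ∀ (N : Type) [Monoid N] [Finite N] (φ : FreeMonoid A →* N),
      ∃ ψ : M →* N, (∀ s : Set N, IsOpen (⇑ψ ⁻¹' s)) ∧ ∀ u, ψ (ι u) = φ u)
    (V : ∀ (S : Type) [Monoid S] [PartialOrder S], Prop)
    (hV : ∀ (S : Type) [Monoid S] [PartialOrder S], V S →
      Finite S ∧ ∀ a b c d : S, a ≤ b → c ≤ d → a * c ≤ b * d)
    (u v : M) :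
    IneqHoldsIn V u v ↔
      ∀ L : Set (FreeMonoid A), VRecognizable V L →
        u ∈ closure (⇑ι '' L) → v ∈ closure (⇑ι '' L) := by
  constructor
  · rintro hineq L ⟨S, iS, oS, hVS, hFin, φ, F, hup, rfl⟩ hu
    obtain ⟨ψ, hψopen, hψι⟩ := hext S φ
    have hLeq : ⇑φ ⁻¹' F = ⇑ι ⁻¹' (⇑ψ ⁻¹' F) := by
      ext w; simp [hψι w]
    rw [hLeq, closure_image_preimage ι hdense ψ hψopen F] at hu ⊢
    exact hup _ _ (hineq S hVS ψ hψopen) hu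
  · intro h S _ _ hVS ψ hψopen
    have hFin : Finite S := (hV S hVS).1
    set F : Set S := {s | ψ u ≤ s} with hF
    have hup : ∀ a b : S, a ≤ b → a ∈ F → b ∈ F := fun a b hab ha => le_trans ha hab
    set L : Set (FreeMonoid A) := ⇑(ψ.comp ι) ⁻¹' F with hL
    have hrec : VRecognizable V L := ⟨S, _, _, hVS, hFin, ψ.comp ι, F, hup, rfl⟩
    have hLeq : L = ⇑ι ⁻¹' (⇑ψ ⁻¹' F) := rfl
    have hcl : closure (⇑ι '' L) = ⇑ψ ⁻¹' F := by
      rw [hLeq]; exact closure_image_preimage ι hdense ψ hψopen F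
    have hu : u ∈ closure (⇑ι '' L) := by rw [hcl]; exact le_refl (ψ u)
    have hv := h L hrec hu
    rw [hcl] at hv
    exact hv
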